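/- Let n, m be natural numbers with n + m even. Then I_{n,m} = (−1)^{(n−m)/2}·(n+m−1)!!, where (n+m−1)!! is the double factorial with the convention (−1)!! = 1 (i.e. for n = m = 0 the value is 1), and (−1)^{(n−m)/2} is interpreted as the sign (−1)^{|n−m|/2}. -/

import Mathlib

open MeasureTheory Real

/-- Physicists' Hermite polynomials: `H 0 x = 1`, `H 1 x = 2x`,
`H (n+1) x = 2x * H n x - 2n * H (n-1) x`. -/
noncomputable def hermiteP : ℕ → ℝ → ℝ
  | 0, _ => 1
  | 1, x => 2 * x
  | n + 2, x => 2 * x * hermiteP (n + 1) x - 2 * ((n : ℝ) + 1) * hermiteP n x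

/-- `I n m = √(2/π) ∫ H_n(x) H_m(x) e^{-2x²} dx`. -/
noncomputable def I (n m : ℕ) : ℝ :=
  Real.sqrt (2 / π) * ∫ x : ℝ, hermiteP n x * hermiteP m x * Real.exp (-2 * x ^ 2)

/-! ### Polynomial representation -/

open Polynomial in
noncomputable def pherm : ℕ → Polynomial ℝ
  | 0 => 1
  | 1 => C 2 * X
  | n + 2 => C 2 * X * pherm (n + 1) - C (2 * ((n : ℝ) + 1)) * pherm n

open Polynomial in
lemma hermiteP_eq : ∀ (n : ℕ) (x : ℝ), hermiteP n x = (pherm n).eval x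
  | 0, x => by simp [hermiteP, pherm]
  | 1, x => by simp [hermiteP, pherm]
  | n + 2, x => by
      simp only [hermiteP, pherm, eval_sub, eval_mul, eval_C, eval_X,
        hermiteP_eq (n + 1) x, hermiteP_eq n x]

open Polynomial in
lemma pherm_succ : ∀ n : ℕ, pherm (n + 1) = C 2 * X * pherm n - C (2 * (n : ℝ)) * pherm (n - 1)
  | 0 => by simp [pherm]
  | n + 1 => by
      show pherm (n + 2) = _
      rw [pherm]
      push_cast
      ring_nf

open Polynomial in
lemma pherm_deriv : ∀ n : ℕ, derivative (pherm n) = C (2 * (n : ℝ)) * pherm (n - 1)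
  | 0 => by simp [pherm]
  | 1 => by simp [pherm]
  | n + 2 => by
      rw [pherm, derivative_sub, derivative_mul, derivative_mul, derivative_mul,
        pherm_deriv (n + 1), pherm_deriv n]
      simp only [derivative_C, derivative_X, Nat.add_sub_cancel]
      have : pherm (n + 2 - 1) = pherm (n + 1) := rfl
      rw [this, pherm_succ n]
      apply Polynomial.funext
      intro x
      simp only [eval_sub, eval_add, eval_mul, eval_C, eval_X, eval_pow, eval_zero, eval_one]
      push_cast
      ring

/-! ### Integrability -/

lemma int_pow_gauss (k : ℕ) :
    Integrable (fun x : ℝ => x ^ k * Real.exp (-2 * x ^ 2)) := by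
  have h := integrable_rpow_mul_exp_neg_mul_sq (b := 2) (by norm_num)
    (s := (k : ℝ)) (by have := Nat.cast_nonneg (α := ℝ) k; linarith)
  simpa [Real.rpow_natCast] using h

open Polynomial in
lemma int_poly (p : Polynomial ℝ) :
    Integrable (fun x : ℝ => p.eval x * Real.exp (-2 * x ^ 2)) := by
  induction p using Polynomial.induction_on' with
  | add p q hp hq => simpa [add_mul] using hp.fun_add hq
  | monomial k a =>
      simp only [eval_monomial]
      simpa [mul_assoc] using (int_pow_gauss k).const_mul a

/-! ### The integral functional -/

noncomputable def G (p : Polynomial ℝ) : ℝ :=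
  ∫ x : ℝ, p.eval x * Real.exp (-2 * x ^ 2)

open Polynomial in
lemma G_sub (p q : Polynomial ℝ) : G (p - q) = G p - G q := by
  unfold G
  rw [← integral_sub (int_poly p) (int_poly q)]
  congr 1; funext x; simp [sub_mul]

open Polynomial in
lemma G_add (p q : Polynomial ℝ) : G (p + q) = G p + G q := by
  unfold G
  rw [← integral_add (int_poly p) (int_poly q)]
  congr 1; funext x; simp [add_mul]

open Polynomial in
lemma G_C_mul (a : ℝ) (p : Polynomial ℝ) : G (C a * p) = a * G p := by
  unfold G
  rw [← integral_const_mul]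
  congr 1; funext x; simp [mul_assoc]

open Polynomial in
lemma hasDerivAt_poly_gauss (p : Polynomial ℝ) (x : ℝ) :
    HasDerivAt (fun y : ℝ => p.eval y * Real.exp (-2 * y ^ 2))
      ((derivative p).eval x * Real.exp (-2 * x ^ 2)
        - 4 * ((X * p).eval x * Real.exp (-2 * x ^ 2))) x := by
  have h2 : HasDerivAt (fun y : ℝ => Real.exp (-2 * y ^ 2))
      (Real.exp (-2 * x ^ 2) * (-2 * (2 * x ^ 1))) x :=
    ((hasDerivAt_pow 2 x).const_mul (-2 : ℝ)).exp
  have h := (p.hasDerivAt x).fun_mul h2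
  refine h.congr_deriv ?_
  simp [eval_mul]
  ring

open Polynomial in
lemma G_key (p : Polynomial ℝ) : G (derivative p) = 4 * G (X * p) := by
  have h0 : ∫ x : ℝ, ((derivative p).eval x * Real.exp (-2 * x ^ 2)
      - 4 * ((X * p).eval x * Real.exp (-2 * x ^ 2))) = 0 :=
    integral_eq_zero_of_hasDerivAt_of_integrable
      (fun x => hasDerivAt_poly_gauss p x)
      ((int_poly (derivative p)).sub ((int_poly (X * p)).const_mul 4))
      (int_poly p)
  rw [integral_sub (int_poly (derivative p)) ((int_poly (X * p)).const_mul 4),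
    integral_const_mul] at h0
  unfold G
  linarith

open Polynomial in
lemma G_X_mul (n m : ℕ) :
    G (X * (pherm n * pherm m)) =
      (n : ℝ) / 2 * G (pherm (n - 1) * pherm m)
        + (m : ℝ) / 2 * G (pherm n * pherm (m - 1)) := by
  have h := G_key (pherm n * pherm m)
  have hd : derivative (pherm n * pherm m) =
      C (2 * (n : ℝ)) * (pherm (n - 1) * pherm m)
        + C (2 * (m : ℝ)) * (pherm n * pherm (m - 1)) := by
    rw [derivative_mul, pherm_deriv n, pherm_deriv m]; ring
  rw [hd, G_add, G_C_mul, G_C_mul] at h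
  linarith

open Polynomial in
lemma G_rec (n m : ℕ) :
    G (pherm (n + 2) * pherm m) =
      (m : ℝ) * G (pherm (n + 1) * pherm (m - 1))
        - ((n : ℝ) + 1) * G (pherm n * pherm m) := by
  have h : pherm (n + 2) * pherm m =
      C 2 * (X * (pherm (n + 1) * pherm m))
        - C (2 * ((n : ℝ) + 1)) * (pherm n * pherm m) := by
    rw [pherm]; ring
  rw [h, G_sub, G_C_mul, G_C_mul, G_X_mul]
  have : ((n : ℕ) + 1 - 1) = n := rfl
  rw [this]
  push_cast
  ring

open Polynomial in
lemma G_one (m : ℕ) :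
    G (pherm 1 * pherm m) = (m : ℝ) * G (pherm 0 * pherm (m - 1)) := by
  have h : pherm 1 * pherm m = C 2 * (X * (pherm 0 * pherm m)) := by
    rw [pherm, pherm]; ring
  rw [h, G_C_mul, G_X_mul]
  push_cast
  ring

lemma G_base : G (pherm 0 * pherm 0) = Real.sqrt (π / 2) := by
  have : pherm 0 * pherm 0 = 1 := by rw [pherm]; ring
  rw [this]
  unfold G
  simp only [Polynomial.eval_one, one_mul]
  exact integral_gaussian 2

lemma G_symm (n m : ℕ) : G (pherm n * pherm m) = G (pherm m * pherm n) := by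
  rw [mul_comm]

/-! ### The target arithmetic function -/

noncomputable def fv (n m : ℕ) : ℝ :=
  (-1 : ℝ) ^ (((n : ℤ) - (m : ℤ)).natAbs / 2) * (Nat.doubleFactorial (n + m - 1) : ℝ)

lemma neg_one_pow_natAbs (c : ℤ) : ((-1 : ℝ)) ^ c.natAbs = (-1 : ℝ) ^ c := by
  rcases Int.natAbs_eq c with h | h
  · conv_rhs => rw [h]
    rw [zpow_natCast]
  · conv_rhs => rw [h]
    rw [zpow_neg, zpow_natCast, ← inv_pow, inv_neg, inv_one]

lemma fv_eq_zpow (n m : ℕ) (h : Even ((n : ℤ) - m)) :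
    fv n m = (-1 : ℝ) ^ (((n : ℤ) - m) / 2) * (Nat.doubleFactorial (n + m - 1) : ℝ) := by
  obtain ⟨c, hc⟩ := h
  unfold fv
  rw [hc, show (c + c) = 2 * c by ring, Int.natAbs_mul]
  have h2 : (2 * c) / 2 = c := by omega
  rw [h2, show (2 : ℤ).natAbs = 2 from rfl, Nat.mul_div_cancel_left _ (by norm_num)]
  rw [neg_one_pow_natAbs]

lemma fv_symm (n m : ℕ) : fv n m = fv m n := by
  unfold fv
  rw [show ((n : ℤ) - m) = -((m : ℤ) - n) by ring, Int.natAbs_neg, Nat.add_comm]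

lemma dfac_succ (s : ℕ) :
    (Nat.doubleFactorial (s + 1) : ℝ) = (s + 1 : ℝ) * (Nat.doubleFactorial (s - 1) : ℝ) := by
  cases s with
  | zero => simp [Nat.doubleFactorial]
  | succ t =>
      rw [show t + 1 + 1 = t + 2 from rfl, show t + 1 - 1 = t from rfl]
      rw [Nat.doubleFactorial]
      push_cast
      ring

lemma fv_rec0 (n : ℕ) (h : Even n) : fv (n + 2) 0 = -((n : ℝ) + 1) * fv n 0 := by
  have h1 : Even (((n : ℕ) + 2 : ℕ) - (0 : ℕ) : ℤ) := by
    obtain ⟨t, ht⟩ := h; exact ⟨(t : ℤ) + 1, by push_cast; omega⟩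
  have h2 : Even ((n : ℤ) - (0 : ℕ)) := by
    obtain ⟨t, ht⟩ := h; exact ⟨(t : ℤ), by push_cast; omega⟩
  rw [fv_eq_zpow _ _ h1, fv_eq_zpow _ _ h2]
  have e1 : ((((n : ℕ) + 2 : ℕ) : ℤ) - ((0 : ℕ) : ℤ)) / 2 = ((n : ℤ) - ((0 : ℕ) : ℤ)) / 2 + 1 := by
    push_cast; omega
  rw [e1]
  have e2 : ((n : ℕ) + 2 + 0 - 1) = n + 1 := by omega
  have e3 : ((n : ℕ) + 0 - 1) = n - 1 := by omega
  rw [e2, e3, dfac_succ n]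
  rw [zpow_add_one₀ (by norm_num : (-1 : ℝ) ≠ 0)]
  push_cast
  ring

lemma fv_rec1 (j : ℕ) (h : Even j) : fv 1 (j + 1) = ((j : ℝ) + 1) * fv 0 j := by
  have h1 : Even (((1 : ℕ) : ℤ) - ((j + 1 : ℕ) : ℤ)) := by
    obtain ⟨t, ht⟩ := h; exact ⟨-(t : ℤ), by push_cast; omega⟩
  have h2 : Even (((0 : ℕ) : ℤ) - (j : ℤ)) := by
    obtain ⟨t, ht⟩ := h; exact ⟨-(t : ℤ), by push_cast; omega⟩
  rw [fv_eq_zpow _ _ h1, fv_eq_zpow _ _ h2]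
  have e1 : (((1 : ℕ) : ℤ) - ((j + 1 : ℕ) : ℤ)) / 2 = (((0 : ℕ) : ℤ) - (j : ℤ)) / 2 := by
    push_cast; omega
  rw [e1]
  have e2 : (1 + (j + 1) - 1) = j + 1 := by omega
  have e3 : (0 + j - 1) = j - 1 := by omega
  rw [e2, e3, dfac_succ j]
  ring

lemma fv_rec (n j : ℕ) (h : Even (n + j + 1)) :
    fv (n + 2) (j + 1) = ((j : ℝ) + 1) * fv (n + 1) j - ((n : ℝ) + 1) * fv n (j + 1) := by
  obtain ⟨t, ht⟩ := h
  have h1 : Even (((n + 2 : ℕ) : ℤ) - ((j + 1 : ℕ) : ℤ)) :=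
    ⟨(t : ℤ) - j, by push_cast; omega⟩
  have h2 : Even (((n + 1 : ℕ) : ℤ) - ((j : ℕ) : ℤ)) :=
    ⟨(t : ℤ) - j, by push_cast; omega⟩
  have h3 : Even (((n : ℕ) : ℤ) - ((j + 1 : ℕ) : ℤ)) :=
    ⟨(t : ℤ) - j - 1, by push_cast; omega⟩
  rw [fv_eq_zpow _ _ h1, fv_eq_zpow _ _ h2, fv_eq_zpow _ _ h3]
  set e : ℤ := (((n + 2 : ℕ) : ℤ) - ((j + 1 : ℕ) : ℤ)) / 2 with he
  have e2 : (((n + 1 : ℕ) : ℤ) - ((j : ℕ) : ℤ)) / 2 = e := by rw [he]; push_cast; omega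
  have e3 : (((n : ℕ) : ℤ) - ((j + 1 : ℕ) : ℤ)) / 2 = e - 1 := by rw [he]; push_cast; omega
  rw [e2, e3]
  have d1 : (n + 2 + (j + 1) - 1) = (n + j) + 2 := by omega
  have d2 : (n + 1 + j - 1) = n + j := by omega
  have d3 : (n + (j + 1) - 1) = n + j := by omega
  rw [d1, d2, d3]
  rw [show (n + j) + 2 = (n + j) + 2 from rfl, Nat.doubleFactorial]
  rw [zpow_sub_one₀ (by norm_num : (-1 : ℝ) ≠ 0)]
  push_cast
  ring

/-! ### Main induction -/

lemma even_of_eq {s : ℕ} (h : Even s) (k : ℕ) (hk : s = k + 2) : Even k := by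
  obtain ⟨t, ht⟩ := h; exact ⟨t - 1, by omega⟩

lemma G_main : ∀ s : ℕ, ∀ n m : ℕ, n + m = s → Even s →
    G (pherm n * pherm m) = Real.sqrt (π / 2) * fv n m := by
  intro s
  induction s using Nat.strong_induction_on with
  | _ s IH =>
    intro n m hnm hs
    match n, m with
    | 0, 0 =>
        rw [G_base]
        unfold fv
        norm_num [Nat.doubleFactorial]
    | 0, 1 => obtain ⟨t, ht⟩ := hs; omega
    | 0, (k + 2) =>
        have hk : Even k := even_of_eq hs k (by omega)
        rw [G_symm, G_rec]
        have hIH := IH k (by omega) k 0 (by omega) (by simpa using hk)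
        simp only [Nat.cast_zero, zero_mul, zero_sub]
        rw [hIH]
        rw [fv_symm 0 (k + 2), fv_rec0 k hk, fv_symm k 0]
        ring
    | 1, m =>
        match m, hnm, hs with
        | 0, hnm, hs => obtain ⟨t, ht⟩ := hs; omega
        | (j + 1), hnm, hs =>
            have hj : Even j := even_of_eq hs j (by omega)
            rw [G_one]
            have hIH := IH j (by omega) 0 j (by omega) (by simpa using hj)
            rw [show ((j : ℕ) + 1 - 1) = j from rfl, hIH]
            rw [fv_rec1 j hj]
            push_cast
            ring
    | (k + 2), 0 =>
        have hk : Even k := even_of_eq hs k (by omega)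
        rw [G_rec]
        have hIH := IH k (by omega) k 0 (by omega) (by simpa using hk)
        simp only [Nat.cast_zero, zero_mul, zero_sub]
        rw [hIH]
        rw [fv_rec0 k hk]
        ring
    | (k + 2), (j + 1) =>
        have hkj : Even (k + j + 1) := by
          obtain ⟨t, ht⟩ := hs; exact ⟨t - 1, by omega⟩
        rw [G_rec]
        have hIH1 := IH (k + 1 + j) (by omega) (k + 1) j (by omega) (by
          obtain ⟨t, ht⟩ := hkj; exact ⟨t, by omega⟩)
        have hIH2 := IH (k + (j + 1)) (by omega) k (j + 1) (by omega) (by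
          obtain ⟨t, ht⟩ := hkj; exact ⟨t, by omega⟩)
        rw [show ((j : ℕ) + 1 - 1) = j from rfl, hIH1, hIH2]
        rw [fv_rec k j hkj]
        push_cast
        ring

theorem I2_even_eq (n m : ℕ) (h : Even (n + m)) :
    I n m = (-1 : ℝ) ^ (((n : ℤ) - (m : ℤ)).natAbs / 2) *
      (Nat.doubleFactorial (n + m - 1) : ℝ) := by
  have hG : I n m = Real.sqrt (2 / π) * G (pherm n * pherm m) := by
    unfold I G
    congr 1
    congr 1
    funext x
    rw [hermiteP_eq, hermiteP_eq, Polynomial.eval_mul]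
  rw [hG, G_main (n + m) n m rfl h]
  have hs : Real.sqrt (2 / π) * Real.sqrt (π / 2) = 1 := by
    rw [← Real.sqrt_mul (by positivity)]
    rw [show (2 / π) * (π / 2) = 1 by field_simp]
    exact Real.sqrt_one
  rw [← mul_assoc, hs, one_mul]
  rfl
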